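/- Termwise contiguous relation used in the proof of equation (3.4): Let G_k(n,a,b,q) = (q^{-2n};q²)_k (a;q²)_k (b;q²)_k (q^{1-2n}/(ab);q²)_k q^{2k} / ((q²;q²)_k (q^{2-2n}/a;q²)_k (q^{4-2n}/b;q²)_k (abq;q²)_k). For integers n ≥ 2 and 1 ≤ k ≤ n, and complex q, a, b with q ≠ 0, a ≠ 0, b ≠ 0 such that all factors appearing in denominators are nonzero, one has G_k(n,a,b,q) − G_k(n,a/q²,b,q) = β_n · G_{k−1}(n−2, a, bq², q), where β_n = (a/q² − q^{1-2n}/(ab)) (1−b)(1−bq)(1−q^{-2n})(1−q^{-2n+2}) q² / ((1−ab/q)(1−abq)(1−q^{2-2n}/a)(1−q^{4-2n}/a)(1−q^{4-2n}/b)). -/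

import Mathlib

/-- The q-shifted factorial `(a; q)ₙ = ∏_{i=0}^{n-1} (1 - a qⁱ)`. -/
noncomputable def qPoch (a q : ℂ) (n : ℕ) : ℂ := ∏ i ∈ Finset.range n, (1 - a * q ^ i)

/-- The denominator of the summand `G_k(n,a,b,q)`:
`(q²;q²)_k (q^{2−2n}/a;q²)_k (q^{4−2n}/b;q²)_k (abq;q²)_k`. -/
noncomputable def GDen (n : ℕ) (a b q : ℂ) (k : ℕ) : ℂ :=
  qPoch (q ^ 2) (q ^ 2) k * qPoch (q ^ (2 - 2 * (n : ℤ)) / a) (q ^ 2) k *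
    qPoch (q ^ (4 - 2 * (n : ℤ)) / b) (q ^ 2) k * qPoch (a * b * q) (q ^ 2) k

/-- The summand
`G_k(n,a,b,q) = (q^{−2n};q²)_k (a;q²)_k (b;q²)_k (q^{1−2n}/(ab);q²)_k q^{2k}
  / ((q²;q²)_k (q^{2−2n}/a;q²)_k (q^{4−2n}/b;q²)_k (abq;q²)_k)`. -/
noncomputable def Gterm (n : ℕ) (a b q : ℂ) (k : ℕ) : ℂ :=
  qPoch (q ^ (-2 * (n : ℤ))) (q ^ 2) k * qPoch a (q ^ 2) k * qPoch b (q ^ 2) k *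
      qPoch (q ^ (1 - 2 * (n : ℤ)) / (a * b)) (q ^ 2) k * q ^ (2 * k) /
    GDen n a b q k

lemma qPoch_back (x q : ℂ) (m : ℕ) : qPoch x q (m+1) = qPoch x q m * (1 - x * q ^ m) :=
  Finset.prod_range_succ _ m

lemma qPoch_front (x q : ℂ) (m : ℕ) : qPoch x q (m+1) = (1 - x) * qPoch (x*q) q m := by
  rw [qPoch, Finset.prod_range_succ']
  rw [mul_comm]
  congr 1
  · simp
  · exact Finset.prod_congr rfl fun i _ => by rw [pow_succ']; ring_nf

lemma qPoch_bridge (x q : ℂ) (m : ℕ) :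
    (1 - x) * qPoch (x*q) q m = qPoch x q m * (1 - x * q ^ m) :=
  (qPoch_front x q m).symm.trans (qPoch_back x q m)


set_option maxHeartbeats 1000000 in
lemma main_core (q a b w P Z1 Y1 Y2 Y3 Y4 Y5 Z6 Y6 Y7 Z8 Y8 : ℂ)
    (hq : q ≠ 0) (ha : a ≠ 0) (hb : b ≠ 0)
    (B1 : (1 - q^2*w) * Y1 = Z1 * (1 - q^2*w*P))
    (B6 : (1 - q^4*w/a) * Y6 = Z6 * (1 - q^4*w/a*P))
    (B8 : (1 - a*b*q) * Y8 = Z8 * (1 - a*b*q*P))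
    (hY5 : Y5 ≠ 0) (hZ6 : Z6 ≠ 0) (hY7 : Y7 ≠ 0) (hZ8 : Z8 ≠ 0)
    (hY6 : Y6 ≠ 0) (hY8 : Y8 ≠ 0)
    (hu5 : 1 - q^2*P ≠ 0) (hu6 : 1 - q^4*w/a*P ≠ 0) (hu8 : 1 - a*b*q*P ≠ 0)
    (hβ1 : 1 - a*b/q ≠ 0) (hβ2 : 1 - a*b*q ≠ 0) (hβ3 : 1 - q^2*w/a ≠ 0)
    (hβ4 : 1 - q^4*w/a ≠ 0) (hβ5 : 1 - q^4*w/b ≠ 0) :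
    (1 - w) * Z1 * (Y2 * (1 - a * P)) * ((1 - b) * Y3) *
          ((1 - q^1*w/(a*b)) * Y4) * (P * q^2) /
        (Y5 * (1 - q^2*P) * ((1 - q^2*w/a) * Z6) * ((1 - q^4*w/b) * Y7) *
          (Z8 * (1 - a*b*q*P))) -
      (1 - w) * Z1 * ((1 - a/q^2) * Y2) * ((1 - b) * Y3) *
          (Y4 * (1 - q^3*w/(a*b)*P)) * (P * q^2) /
        (Y5 * (1 - q^2*P) * (Z6 * (1 - q^4*w/a*P)) * ((1 - q^4*w/b) * Y7) *
          ((1 - a*b/q) * Z8)) =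
    (a/q^2 - q^1*w/(a*b)) * (1 - b) * (1 - b*q) * (1 - w) * (1 - q^2*w) * q^2 /
        ((1 - a*b/q) * (1 - a*b*q) * (1 - q^2*w/a) * (1 - q^4*w/a) * (1 - q^4*w/b)) *
      (Y1 * Y2 * Y3 * Y4 * P / (Y5 * Y6 * Y7 * Y8)) := by
  rw [div_mul_div_comm]
  rw [show (a/q^2 - q^1*w/(a*b)) * (1 - b) * (1 - b*q) * (1 - w) * (1 - q^2*w) * q^2 *
      (Y1 * Y2 * Y3 * Y4 * P) =
      ((1 - q^2*w) * Y1) *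
        ((a/q^2 - q^1*w/(a*b)) * (1 - b) * (1 - b*q) * (1 - w) * q^2 * (Y2 * Y3 * Y4 * P))
      from by ring, B1]
  rw [show (1 - a*b/q) * (1 - a*b*q) * (1 - q^2*w/a) * (1 - q^4*w/a) * (1 - q^4*w/b) *
      (Y5 * Y6 * Y7 * Y8) =
      ((1 - q^4*w/a) * Y6) * (((1 - a*b*q) * Y8) *
        ((1 - a*b/q) * (1 - q^2*w/a) * (1 - q^4*w/b) * (Y5 * Y7)))
      from by ring, B6, B8]
  -- the two LHS terms as a common factor times small quotients
  have e1 : (1 - w) * Z1 * (Y2 * (1 - a * P)) * ((1 - b) * Y3) *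
          ((1 - q^1*w/(a*b)) * Y4) * (P * q^2) /
        (Y5 * (1 - q^2*P) * ((1 - q^2*w/a) * Z6) * ((1 - q^4*w/b) * Y7) *
          (Z8 * (1 - a*b*q*P))) =
      ((1 - w) * Z1 * ((1 - b) * Y3) * Y2 * Y4 * (P * q^2)) /
          (Y5 * (1 - q^2*P) * Z6 * ((1 - q^4*w/b) * Y7) * Z8) *
        (((1 - a*P) * (1 - q^1*w/(a*b))) / ((1 - q^2*w/a) * (1 - a*b*q*P))) := by
    rw [div_mul_div_comm]; congr 1 <;> ring
  have e2 : (1 - w) * Z1 * ((1 - a/q^2) * Y2) * ((1 - b) * Y3) *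
          (Y4 * (1 - q^3*w/(a*b)*P)) * (P * q^2) /
        (Y5 * (1 - q^2*P) * (Z6 * (1 - q^4*w/a*P)) * ((1 - q^4*w/b) * Y7) *
          ((1 - a*b/q) * Z8)) =
      ((1 - w) * Z1 * ((1 - b) * Y3) * Y2 * Y4 * (P * q^2)) /
          (Y5 * (1 - q^2*P) * Z6 * ((1 - q^4*w/b) * Y7) * Z8) *
        (((1 - a/q^2) * (1 - q^3*w/(a*b)*P)) / ((1 - q^4*w/a*P) * (1 - a*b/q))) := by
    rw [div_mul_div_comm]; congr 1 <;> ring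
  -- scalar clearing lemmas
  have hab : a * b ≠ 0 := mul_ne_zero ha hb
  have hq2 : (q:ℂ)^2 ≠ 0 := pow_ne_zero 2 hq
  have c1 : a*b*(1 - q^1*w/(a*b)) = a*b - q^1*w := by
    rw [mul_sub, mul_one, mul_div_cancel₀ _ hab]
  have c2 : q^2*(1 - a/q^2) = q^2 - a := by
    rw [mul_sub, mul_one, mul_div_cancel₀ _ hq2]
  have c3 : a*b*(1 - q^3*w/(a*b)*P) = a*b - q^3*w*P := by
    rw [mul_sub, mul_one, mul_comm (q^3*w/(a*b)) P, ← mul_assoc, mul_comm (a*b) P,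
      mul_assoc, mul_div_cancel₀ _ hab]; ring
  have c4 : a*(1 - q^2*w/a) = a - q^2*w := by
    rw [mul_sub, mul_one, mul_div_cancel₀ _ ha]
  have c5 : a*(1 - q^4*w/a*P) = a - q^4*w*P := by
    rw [mul_sub, mul_one, mul_comm (q^4*w/a) P, ← mul_assoc, mul_comm a P, mul_assoc,
      mul_div_cancel₀ _ ha]; ring
  have c6 : q*(1 - a*b/q) = q - a*b := by
    rw [mul_sub, mul_one, mul_div_cancel₀ _ hq]
  have c7 : a*b*q^2*(a/q^2 - q^1*w/(a*b)) = a^2*b - q^3*w := by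
    rw [mul_sub, show a*b*q^2*(a/q^2) = a*b*a*(q^2/q^2) from by ring,
      show a*b*q^2*(q^1*w/(a*b)) = q^2*(q^1*w)*(a*b/(a*b)) from by ring,
      div_self hq2, div_self hab, mul_one, mul_one]; ring
  -- the small bracket identity
  have h : (1 - a*P) * (1 - q^1*w/(a*b)) * ((1 - q^4*w/a*P) * (1 - a*b/q)) -
      (1 - q^2*w/a) * (1 - a*b*q*P) * ((1 - a/q^2) * (1 - q^3*w/(a*b)*P)) =
      (1 - q^2*w*P) * (a/q^2 - q^1*w/(a*b)) * (1 - b*q) * (1 - q^2*P) := by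
    apply mul_left_cancel₀ (show a^2*b^2*q^3 ≠ 0 from by
      exact mul_ne_zero (mul_ne_zero (pow_ne_zero 2 ha) (pow_ne_zero 2 hb)) (pow_ne_zero 3 hq))
    rw [show a^2*b^2*q^3 * ((1 - a*P) * (1 - q^1*w/(a*b)) * ((1 - q^4*w/a*P) * (1 - a*b/q)) -
        (1 - q^2*w/a) * (1 - a*b*q*P) * ((1 - a/q^2) * (1 - q^3*w/(a*b)*P))) =
        (1 - a*P) * (a*b*(1 - q^1*w/(a*b))) * ((a*(1 - q^4*w/a*P)) * (q*(1 - a*b/q))) * (b*q^2) -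
        (a*(1 - q^2*w/a)) * (1 - a*b*q*P) * ((q^2*(1 - a/q^2)) * (a*b*(1 - q^3*w/(a*b)*P))) * (b*q)
        from by ring, c1, c2, c3, c4, c5, c6,
      show a^2*b^2*q^3 * ((1 - q^2*w*P) * (a/q^2 - q^1*w/(a*b)) * (1 - b*q) * (1 - q^2*P)) =
        (a*b*q^2*(a/q^2 - q^1*w/(a*b))) * ((1 - q^2*w*P) * (1 - b*q) * (1 - q^2*P)) * (a*b*q)
        from by ring, c7]
    ring
  have e3 : ((1 - a*P) * (1 - q^1*w/(a*b))) / ((1 - q^2*w/a) * (1 - a*b*q*P)) -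
      ((1 - a/q^2) * (1 - q^3*w/(a*b)*P)) / ((1 - q^4*w/a*P) * (1 - a*b/q)) =
      ((1 - q^2*w*P) * (a/q^2 - q^1*w/(a*b)) * (1 - b*q) * (1 - q^2*P)) /
        ((1 - q^2*w/a) * (1 - a*b*q*P) * ((1 - q^4*w/a*P) * (1 - a*b/q))) := by
    rw [div_sub_div _ _ (mul_ne_zero hβ3 hu8) (mul_ne_zero hu6 hβ1), h]
  rw [e1, e2, ← mul_sub, e3, div_mul_div_comm]
  rw [show (1 - w) * Z1 * ((1 - b) * Y3) * Y2 * Y4 * (P * q^2) *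
      ((1 - q^2*w*P) * (a/q^2 - q^1*w/(a*b)) * (1 - b*q) * (1 - q^2*P)) =
      (1 - q^2*P) * ((1 - w) * Z1 * ((1 - b) * Y3) * Y2 * Y4 * (P * q^2) *
        ((1 - q^2*w*P) * (a/q^2 - q^1*w/(a*b)) * (1 - b*q))) from by ring]
  rw [show Y5 * (1 - q^2*P) * Z6 * ((1 - q^4*w/b) * Y7) * Z8 *
      ((1 - q^2*w/a) * (1 - a*b*q*P) * ((1 - q^4*w/a*P) * (1 - a*b/q))) =
      (1 - q^2*P) * (Y5 * Z6 * ((1 - q^4*w/b) * Y7) * Z8 *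
        ((1 - q^2*w/a) * (1 - a*b*q*P) * ((1 - q^4*w/a*P) * (1 - a*b/q)))) from by ring]
  rw [mul_div_mul_left _ _ hu5]
  congr 1 <;> ring

/-- The termwise contiguous relation (3.5) used in the proof of equation (3.4):
`G_k(n,a,b,q) − G_k(n,a/q²,b,q) = βₙ G_{k−1}(n−2, a, bq², q)`. -/
theorem andrews_termwise_relation_G (n k : ℕ) (hn : 2 ≤ n) (hk1 : 1 ≤ k) (hk : k ≤ n)
    (q a b : ℂ) (hq : q ≠ 0) (ha : a ≠ 0) (hb : b ≠ 0)
    (hd1 : GDen n a b q k ≠ 0)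
    (hd2 : GDen n (a / q ^ 2) b q k ≠ 0)
    (hd3 : GDen (n - 2) a (b * q ^ 2) q (k - 1) ≠ 0)
    (hβ1 : 1 - a * b / q ≠ 0) (hβ2 : 1 - a * b * q ≠ 0)
    (hβ3 : 1 - q ^ (2 - 2 * (n : ℤ)) / a ≠ 0)
    (hβ4 : 1 - q ^ (4 - 2 * (n : ℤ)) / a ≠ 0)
    (hβ5 : 1 - q ^ (4 - 2 * (n : ℤ)) / b ≠ 0) :
    Gterm n a b q k - Gterm n (a / q ^ 2) b q k =
      (a / q ^ 2 - q ^ (1 - 2 * (n : ℤ)) / (a * b)) * (1 - b) * (1 - b * q) *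
          (1 - q ^ (-2 * (n : ℤ))) * (1 - q ^ (-2 * (n : ℤ) + 2)) * q ^ 2 /
        ((1 - a * b / q) * (1 - a * b * q) * (1 - q ^ (2 - 2 * (n : ℤ)) / a) *
          (1 - q ^ (4 - 2 * (n : ℤ)) / a) * (1 - q ^ (4 - 2 * (n : ℤ)) / b)) *
        Gterm (n - 2) a (b * q ^ 2) q (k - 1) := by
  obtain ⟨m, rfl⟩ : ∃ m, k = m + 1 := ⟨k - 1, by omega⟩
  obtain ⟨N, rfl⟩ : ∃ N, n = N + 2 := ⟨n - 2, by omega⟩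
  simp only [Nat.add_sub_cancel] at hd3 ⊢
  set w : ℂ := q ^ (-2 * ((N:ℤ) + 2)) with hw
  have hqz : ∀ c : ℕ, q ^ ((c:ℤ) + -2 * ((N:ℤ) + 2)) = q ^ c * w := by
    intro c
    rw [hw, zpow_add₀ hq, zpow_natCast]
  have e0 : q ^ (-2 * (((N:ℕ)+2 : ℕ):ℤ)) = w := by
    rw [show (-2 * (((N:ℕ)+2 : ℕ):ℤ)) = ((0:ℕ):ℤ) + -2*((N:ℤ)+2) by push_cast; ring, hqz 0,
      pow_zero, one_mul]
  have e1 : q ^ (1 - 2 * (((N:ℕ)+2 : ℕ):ℤ)) = q ^ 1 * w := by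
    rw [show (1 - 2 * (((N:ℕ)+2 : ℕ):ℤ)) = ((1:ℕ):ℤ) + -2*((N:ℤ)+2) by push_cast; ring, hqz 1]
  have e2 : q ^ (2 - 2 * (((N:ℕ)+2 : ℕ):ℤ)) = q ^ 2 * w := by
    rw [show (2 - 2 * (((N:ℕ)+2 : ℕ):ℤ)) = ((2:ℕ):ℤ) + -2*((N:ℤ)+2) by push_cast; ring, hqz 2]
  have e4 : q ^ (4 - 2 * (((N:ℕ)+2 : ℕ):ℤ)) = q ^ 4 * w := by
    rw [show (4 - 2 * (((N:ℕ)+2 : ℕ):ℤ)) = ((4:ℕ):ℤ) + -2*((N:ℤ)+2) by push_cast; ring, hqz 4]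
  have e2' : q ^ (-2 * (((N:ℕ)+2 : ℕ):ℤ) + 2) = q ^ 2 * w := by
    rw [show (-2 * (((N:ℕ)+2 : ℕ):ℤ) + 2) = ((2:ℕ):ℤ) + -2*((N:ℤ)+2) by push_cast; ring, hqz 2]
  have f0 : q ^ (-2 * ((N:ℕ):ℤ)) = q ^ 4 * w := by
    rw [show (-2 * ((N:ℕ):ℤ)) = ((4:ℕ):ℤ) + -2*((N:ℤ)+2) by push_cast; ring, hqz 4]
  have f1 : q ^ (1 - 2 * ((N:ℕ):ℤ)) = q ^ 5 * w := by
    rw [show (1 - 2 * ((N:ℕ):ℤ)) = ((5:ℕ):ℤ) + -2*((N:ℤ)+2) by push_cast; ring, hqz 5]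
  have f2 : q ^ (2 - 2 * ((N:ℕ):ℤ)) = q ^ 6 * w := by
    rw [show (2 - 2 * ((N:ℕ):ℤ)) = ((6:ℕ):ℤ) + -2*((N:ℤ)+2) by push_cast; ring, hqz 6]
  have f4 : q ^ (4 - 2 * ((N:ℕ):ℤ)) = q ^ 8 * w := by
    rw [show (4 - 2 * ((N:ℕ):ℤ)) = ((8:ℕ):ℤ) + -2*((N:ℤ)+2) by push_cast; ring, hqz 8]
  simp only [Gterm, GDen, e0, e1, e2, e4, e2', f0, f1, f2, f4] at hd1 hd2 hd3 hβ3 hβ4 hβ5 ⊢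
  -- normalize arguments
  have g1 : q^1*w/(a/q^2*b) = q^3*w/(a*b) := by field_simp <;> ring
  have g2 : q^2*w/(a/q^2) = q^4*w/a := by field_simp <;> ring
  have g3 : a/q^2*b*q = a*b/q := by field_simp <;> ring
  have g4 : q^5*w/(a*(b*q^2)) = q^3*w/(a*b) := by field_simp <;> ring
  have g5 : q^8*w/(b*q^2) = q^6*w/b := by field_simp <;> ring
  have g6 : a*(b*q^2)*q = a*b*q^3 := by ring
  have g7 : q^(2*(m+1)) = (q^2)^m * q^2 := by rw [pow_mul, pow_succ]
  have g8 : q^(2*m) = (q^2)^m := by rw [pow_mul]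
  simp only [g1, g2, g3, g4, g5, g6, g7, g8] at hd1 hd2 hd3 ⊢
  -- peel
  simp only [qPoch_front w (q^2) m, qPoch_back a (q^2) m, qPoch_front b (q^2) m,
    qPoch_front (q^1*w/(a*b)) (q^2) m, qPoch_back (q^2) (q^2) m,
    qPoch_front (q^2*w/a) (q^2) m, qPoch_front (q^4*w/b) (q^2) m,
    qPoch_back (a*b*q) (q^2) m, qPoch_front (a/q^2) (q^2) m,
    qPoch_back (q^3*w/(a*b)) (q^2) m, qPoch_back (q^4*w/a) (q^2) m,
    qPoch_front (a*b/q) (q^2) m] at hd1 hd2 ⊢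
  -- normalize peeled arguments
  have k1 : w*q^2 = q^2*w := by ring
  have k3 : q^1*w/(a*b)*q^2 = q^3*w/(a*b) := by ring
  have k4 : q^2*w/a*q^2 = q^4*w/a := by ring
  have k5 : q^4*w/b*q^2 = q^6*w/b := by ring
  have k6 : a/q^2*q^2 = a := by field_simp
  have k7 : a*b/q*q^2 = a*b*q := by field_simp <;> ring
  simp only [k1, k3, k4, k5, k6, k7] at hd1 hd2 ⊢
  -- bridges
  have B1 : (1 - q^2*w) * qPoch (q^4*w) (q^2) m =
      qPoch (q^2*w) (q^2) m * (1 - q^2*w*(q^2)^m) := by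
    have h := qPoch_bridge (q^2*w) (q^2) m
    rw [show q^2*w*q^2 = q^4*w from by ring] at h
    exact h
  have B6 : (1 - q^4*w/a) * qPoch (q^6*w/a) (q^2) m =
      qPoch (q^4*w/a) (q^2) m * (1 - q^4*w/a*(q^2)^m) := by
    have h := qPoch_bridge (q^4*w/a) (q^2) m
    rw [show q^4*w/a*q^2 = q^6*w/a from by ring] at h
    exact h
  have B8 : (1 - a*b*q) * qPoch (a*b*q^3) (q^2) m =
      qPoch (a*b*q) (q^2) m * (1 - a*b*q*(q^2)^m) := by
    have h := qPoch_bridge (a*b*q) (q^2) m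
    rw [show a*b*q*q^2 = a*b*q^3 from by ring] at h
    exact h
  -- nonzero facts
  have hY5 : qPoch (q^2) (q^2) m ≠ 0 := fun h => hd1 (by rw [h]; ring)
  have hu5 : 1 - q^2*(q^2)^m ≠ 0 := fun h => hd1 (by rw [h]; ring)
  have hZ6 : qPoch (q^4*w/a) (q^2) m ≠ 0 := fun h => hd1 (by rw [h]; ring)
  have hY7 : qPoch (q^6*w/b) (q^2) m ≠ 0 := fun h => hd1 (by rw [h]; ring)
  have hZ8 : qPoch (a*b*q) (q^2) m ≠ 0 := fun h => hd1 (by rw [h]; ring)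
  have hu8 : 1 - a*b*q*(q^2)^m ≠ 0 := fun h => hd1 (by rw [h]; ring)
  have hu6 : 1 - q^4*w/a*(q^2)^m ≠ 0 := fun h => hd2 (by rw [h]; ring)
  have hY6 : qPoch (q^6*w/a) (q^2) m ≠ 0 := fun h => hd3 (by rw [h]; ring)
  have hY8 : qPoch (a*b*q^3) (q^2) m ≠ 0 := fun h => hd3 (by rw [h]; ring)
  exact main_core q a b w ((q^2)^m) (qPoch (q^2*w) (q^2) m) (qPoch (q^4*w) (q^2) m)
    (qPoch a (q^2) m) (qPoch (b*q^2) (q^2) m) (qPoch (q^3*w/(a*b)) (q^2) m)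
    (qPoch (q^2) (q^2) m) (qPoch (q^4*w/a) (q^2) m) (qPoch (q^6*w/a) (q^2) m)
    (qPoch (q^6*w/b) (q^2) m) (qPoch (a*b*q) (q^2) m) (qPoch (a*b*q^3) (q^2) m)
    hq ha hb B1 B6 B8 hY5 hZ6 hY7 hZ8 hY6 hY8 hu5 hu6 hu8 hβ1 hβ2 hβ3 hβ4 hβ5
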